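/- Let P be a finite set of points in the Euclidean plane and k a natural number. If every closed disk of radius 1 contains at most k points of P, then every closed disk of radius 2 contains at most 9k points of P. -/

import Mathlib

/-- If every closed disk of radius 1 contains at most `k` points of a finite set `P`
in the plane, then every closed disk of radius 2 contains at most `9 * k` points of `P`. -/
theorem card_in_closedBall_two_le_nine_mul
    (P : Finset (EuclideanSpace ℝ (Fin 2))) (k : ℕ)
    (h : ∀ c : EuclideanSpace ℝ (Fin 2),
      ((P : Set (EuclideanSpace ℝ (Fin 2))) ∩ Metric.closedBall c 1).ncard ≤ k) :
    ∀ c : EuclideanSpace ℝ (Fin 2),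
      ((P : Set (EuclideanSpace ℝ (Fin 2))) ∩ Metric.closedBall c 2).ncard ≤ 9 * k := by
  intro c
  classical
  set f : ℝ → ℝ := fun t => if t ≤ -2/3 then -4/3 else if t ≤ 2/3 then 0 else 4/3 with hf
  have hfrange : ∀ t, f t = -4/3 ∨ f t = 0 ∨ f t = 4/3 := by
    intro t; simp only [hf]; split_ifs <;> simp
  have hfbound : ∀ t : ℝ, |t| ≤ 2 → |t - f t| ≤ 2/3 := by
    intro t ht
    rw [abs_le] at ht ⊢
    simp only [hf]
    split_ifs with h1 h2 <;> constructor <;> linarith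
  let g : EuclideanSpace ℝ (Fin 2) → EuclideanSpace ℝ (Fin 2) :=
    fun p => WithLp.toLp 2 (fun i => c i + f (p i - c i))
  let off : Finset ℝ := {-4/3, 0, 4/3}
  let C : Finset (EuclideanSpace ℝ (Fin 2)) :=
    (off ×ˢ off).image
      (fun a => (WithLp.toLp 2 (fun i => c i + if i = 0 then a.1 else a.2) : EuclideanSpace ℝ (Fin 2)))
  have hoff : off.card ≤ 3 := by
    have h1 := Finset.card_insert_le (-4/3 : ℝ) ({0, 4/3} : Finset ℝ)
    have h2 := Finset.card_insert_le (0 : ℝ) ({4/3} : Finset ℝ)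
    have h3 : ({(4:ℝ)/3} : Finset ℝ).card = 1 := Finset.card_singleton _
    simp only [off]
    omega
  have hC : C.card ≤ 9 := by
    refine Finset.card_image_le.trans ?_
    rw [Finset.card_product]
    calc off.card * off.card ≤ 3 * 3 := Nat.mul_le_mul hoff hoff
    _ = 9 := rfl
  have key : ∀ s : EuclideanSpace ℝ (Fin 2),
      (P.filter (· ∈ Metric.closedBall s 1)).card ≤ k := by
    intro s
    have hs := h s
    have : ((P : Set (EuclideanSpace ℝ (Fin 2))) ∩ Metric.closedBall s 1)
        = ↑(P.filter (· ∈ Metric.closedBall s 1)) := by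
      ext x; simp [and_comm]
    rwa [this, Set.ncard_coe_finset] at hs
  have hcoord : ∀ p : EuclideanSpace ℝ (Fin 2), dist p c ≤ 2 → ∀ i, |p i - c i| ≤ 2 := by
    intro p hp i
    have h1 : |p i - c i| = Real.sqrt ((p i - c i)^2) := (Real.sqrt_sq_eq_abs _).symm
    rw [EuclideanSpace.dist_eq] at hp
    simp only [Real.dist_eq, sq_abs] at hp
    have h2 : (p i - c i)^2 ≤ ∑ j, (p j - c j)^2 := by
      apply Finset.single_le_sum (f := fun j => (p j - c j)^2)
      · intro j _; positivity
      · exact Finset.mem_univ i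
    calc |p i - c i| = Real.sqrt ((p i - c i)^2) := h1
      _ ≤ Real.sqrt (∑ j, (p j - c j)^2) := Real.sqrt_le_sqrt h2
      _ ≤ 2 := hp
  have hdist : ∀ p : EuclideanSpace ℝ (Fin 2), dist p c ≤ 2 → dist p (g p) ≤ 1 := by
    intro p hp
    rw [EuclideanSpace.dist_eq]
    simp only [Real.dist_eq, sq_abs]
    have hb : ∀ i, (p i - g p i)^2 ≤ (2/3)^2 := by
      intro i
      have := hfbound (p i - c i) (hcoord p hp i)
      have hgi : g p i = c i + f (p i - c i) := rfl
      rw [hgi]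
      have h1 : |p i - (c i + f (p i - c i))| ≤ 2/3 := by
        have : p i - (c i + f (p i - c i)) = (p i - c i) - f (p i - c i) := by ring
        rw [this]; exact this ▸ hfbound (p i - c i) (hcoord p hp i)
      calc (p i - (c i + f (p i - c i)))^2 = |p i - (c i + f (p i - c i))|^2 := (sq_abs _).symm
        _ ≤ (2/3)^2 := by
            apply pow_le_pow_left₀ (abs_nonneg _) h1
    have hsum : ∑ i, (p i - g p i)^2 ≤ 8/9 := by
      rw [Fin.sum_univ_two]
      have := hb 0; have := hb 1
      nlinarith [hb 0, hb 1]
    calc Real.sqrt (∑ i, (p i - g p i)^2) ≤ Real.sqrt (8/9) := Real.sqrt_le_sqrt hsum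
      _ ≤ Real.sqrt 1 := Real.sqrt_le_sqrt (by norm_num)
      _ = 1 := Real.sqrt_one
  have hsub : P.filter (· ∈ Metric.closedBall c 2)
      ⊆ C.biUnion (fun s => P.filter (· ∈ Metric.closedBall s 1)) := by
    intro p hp
    rw [Finset.mem_filter] at hp
    obtain ⟨hpP, hpc⟩ := hp
    rw [Metric.mem_closedBall] at hpc
    refine Finset.mem_biUnion.mpr ⟨g p, ?_, ?_⟩
    · refine Finset.mem_image.mpr ⟨(f (p 0 - c 0), f (p 1 - c 1)), ?_, ?_⟩
      · rw [Finset.mem_product]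
        constructor <;>
        · simp only [off, Finset.mem_insert, Finset.mem_singleton]
          exact hfrange _
      · ext i
        fin_cases i <;> rfl
    · rw [Finset.mem_filter]
      exact ⟨hpP, Metric.mem_closedBall.mpr (hdist p hpc)⟩
  have heq : ((P : Set (EuclideanSpace ℝ (Fin 2))) ∩ Metric.closedBall c 2)
      = ↑(P.filter (· ∈ Metric.closedBall c 2)) := by
    ext x; simp [and_comm]
  rw [heq, Set.ncard_coe_finset]
  calc (P.filter (· ∈ Metric.closedBall c 2)).card
      ≤ (C.biUnion (fun s => P.filter (· ∈ Metric.closedBall s 1))).card :=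
        Finset.card_le_card hsub
    _ ≤ ∑ s ∈ C, (P.filter (· ∈ Metric.closedBall s 1)).card := Finset.card_biUnion_le
    _ ≤ ∑ _s ∈ C, k := Finset.sum_le_sum (fun s _ => key s)
    _ = C.card * k := by rw [Finset.sum_const, smul_eq_mul]
    _ ≤ 9 * k := Nat.mul_le_mul_right k hC
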